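/- (D^rrs is trivial on Bridged ts-LQParity) For every N ≥ 2, in the QBF Bridged ts-LQParity(N), D^rrs and D^trv coincide: for every existential variable y with z ∈ D_y (namely y ∈ {t_2,…,t_N, s_2,…,s_N, b}), the pair (z,y) belongs to D^rrs(Bridged ts-LQParity(N)). -/

import Mathlib

/-! ## Literals, clauses, DQBFs -/

structure Lit (V : Type) where
  var : V
  pos : Bool
deriving DecidableEq

def Lit.negate {V : Type} (l : Lit V) : Lit V := ⟨l.var, !l.pos⟩

abbrev Clause (V : Type) [DecidableEq V] : Type := Finset (Lit V)

/-- An S-form DQBF: universal variables `U`, existential variables `E`,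
dependency sets `dep` (only meaningful on `E`), and a CNF matrix. -/
structure DQBF (V : Type) [DecidableEq V] where
  U : Finset V
  E : Finset V
  dep : V → Finset V
  matrix : Finset (Clause V)

variable {V : Type} [DecidableEq V]

/-- Well-formedness of a DQBF. -/
def DQBF.WF (ψ : DQBF V) : Prop :=
  Disjoint ψ.U ψ.E ∧ (∀ x ∈ ψ.E, ψ.dep x ⊆ ψ.U) ∧
    ∀ C ∈ ψ.matrix, ∀ l ∈ C, l.var ∈ ψ.U ∪ ψ.E

/-- Dependency set with the convention `D_u = {u}` for universal variables. -/
def DQBF.depOf (ψ : DQBF V) (y : V) : Finset V := if y ∈ ψ.U then {y} else ψ.dep y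

/-! ## Semantics -/

def Clause.Sat (β : V → Bool) (C : Clause V) : Prop := ∃ l ∈ C, β l.var = l.pos

/-- A Skolem function set respects the dependency sets if the value of each
existential variable only depends on the assignment to its dependency set. -/
def DQBF.Respects (ψ : DQBF V) (f : V → (V → Bool) → Bool) : Prop :=
  ∀ x ∈ ψ.E, ∀ β γ : V → Bool, (∀ u ∈ ψ.dep x, β u = γ u) → f x β = f x γ

/-- The completed assignment `β ∪ f(β)`. -/
def DQBF.Completed (ψ : DQBF V) (f : V → (V → Bool) → Bool) (β : V → Bool) : V → Bool :=
  fun v => if v ∈ ψ.E then f v β else β v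

def DQBF.IsModel (ψ : DQBF V) (f : V → (V → Bool) → Bool) : Prop :=
  ψ.Respects f ∧ ∀ β : V → Bool, ∀ C ∈ ψ.matrix, Clause.Sat (ψ.Completed f β) C

def DQBF.IsTrue (ψ : DQBF V) : Prop := ∃ f, ψ.IsModel f

/-- Flip the value of variable `u` in an assignment. -/
def flipAt (u : V) (α : V → Bool) : V → Bool := fun w => if w = u then !(α w) else α w

/-- `(α, x, u)` is a dependency witness for the Skolem function set `f`. -/
def DepWitness (ψ : DQBF V) (f : V → (V → Bool) → Bool) (α : V → Bool) (x u : V) : Prop :=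
  f x α ≠ f x (flipAt u α)

/-! ## Resolution paths and dependency schemes -/

/-- The clauses of the matrix containing the literal `w`. -/
def DQBF.litClauses (ψ : DQBF V) (w : Lit V) : Finset (Clause V) :=
  ψ.matrix.filter fun C => w ∈ C

/-- `S_u`: the existential variables depending on `u`. -/
def DQBF.Sset (ψ : DQBF V) (u : V) : Finset V := ψ.E.filter fun x => u ∈ ψ.dep x

/-- `pathl^pu(w, ψ, χ, S)`: the least set of literals on `S`-variables reachable by a
`w`-pure resolution path starting from the clauses of `χ`. -/
inductive PathLPU (ψ : DQBF V) (w : Lit V) (χ : Finset (Clause V)) (S : Finset V) :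
    Lit V → Prop
  | base {C : Clause V} {l : Lit V} : C ∈ χ → l ∈ C → l.var ∈ S → PathLPU ψ w χ S l
  | step {p l : Lit V} {Ecl : Clause V} :
      PathLPU ψ w χ S p → Ecl ∈ ψ.matrix → p.negate ∈ Ecl → w.negate ∉ Ecl →
      l ∈ Ecl → l ≠ p.negate → l.var ∈ S → PathLPU ψ w χ S l

/-- `pathc^pu(w, ψ, χ, S)`: the corresponding set of reachable clauses. -/
inductive PathCPU (ψ : DQBF V) (w : Lit V) (χ : Finset (Clause V)) (S : Finset V) :
    Clause V → Prop
  | base {C : Clause V} : C ∈ χ → PathCPU ψ w χ S C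
  | step {p : Lit V} {Ecl : Clause V} :
      PathLPU ψ w χ S p → Ecl ∈ ψ.matrix → p.negate ∈ Ecl → w.negate ∉ Ecl →
      PathCPU ψ w χ S Ecl

/-- `pathl^rrs(ψ, χ, S)`: the analogous closure without the purity requirement. -/
inductive PathLRRS (ψ : DQBF V) (χ : Finset (Clause V)) (S : Finset V) : Lit V → Prop
  | base {C : Clause V} {l : Lit V} : C ∈ χ → l ∈ C → l.var ∈ S → PathLRRS ψ χ S l
  | step {p l : Lit V} {Ecl : Clause V} :
      PathLRRS ψ χ S p → Ecl ∈ ψ.matrix → p.negate ∈ Ecl →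
      l ∈ Ecl → l ≠ p.negate → l.var ∈ S → PathLRRS ψ χ S l

/-- `w ⤳ l` (pure path connection). -/
def ConnPU (ψ : DQBF V) (w l : Lit V) : Prop :=
  PathLPU ψ w (ψ.litClauses w) (ψ.Sset w.var) l

/-- `w ⤳ʳ l` (reflexive resolution path connection). -/
def ConnRRS (ψ : DQBF V) (w l : Lit V) : Prop :=
  PathLRRS ψ (ψ.litClauses w) (ψ.Sset w.var) l

/-- The pure universal dependency scheme `D^pu`. -/
def Dpu (ψ : DQBF V) (u x : V) : Prop :=
  u ∈ ψ.dep x ∧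
    ((ConnPU ψ ⟨u, true⟩ ⟨x, true⟩ ∧ ConnPU ψ ⟨u, false⟩ ⟨x, false⟩) ∨
      (ConnPU ψ ⟨u, false⟩ ⟨x, true⟩ ∧ ConnPU ψ ⟨u, true⟩ ⟨x, false⟩))

/-- The reflexive resolution path dependency scheme `D^rrs`. -/
def Drrs (ψ : DQBF V) (u x : V) : Prop :=
  u ∈ ψ.dep x ∧
    ((ConnRRS ψ ⟨u, true⟩ ⟨x, true⟩ ∧ ConnRRS ψ ⟨u, false⟩ ⟨x, false⟩) ∨
      (ConnRRS ψ ⟨u, false⟩ ⟨x, true⟩ ∧ ConnRRS ψ ⟨u, true⟩ ⟨x, false⟩))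

/-- The trivial dependency scheme `D^trv`. -/
def Dtrv (ψ : DQBF V) (u x : V) : Prop := u ∈ ψ.dep x

/-! ## LDQ(D)-Res -/

/-- Derivability of a clause in LDQ(D)-Res from the matrix of `ψ`, for a
dependency relation `D`. -/
inductive LDQDeriv (ψ : DQBF V) (D : V → V → Prop) : Clause V → Prop
  | ax {C : Clause V} : C ∈ ψ.matrix → LDQDeriv ψ D C
  | red {C : Clause V} {w : Lit V} :
      LDQDeriv ψ D (insert w C) → w.var ∈ ψ.U → w ∉ C →
      (∀ l ∈ C, l.var ∈ ψ.E → ¬ D w.var l.var) → LDQDeriv ψ D C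
  | res {Ec Fc : Clause V} {x : V} :
      x ∈ ψ.E →
      LDQDeriv ψ D (insert ⟨x, false⟩ Ec) → LDQDeriv ψ D (insert ⟨x, true⟩ Fc) →
      (⟨x, false⟩ : Lit V) ∉ Ec → (⟨x, true⟩ : Lit V) ∉ Fc →
      (∀ v ∈ Ec, v.var ∈ ψ.U → v.negate ∈ Fc → ¬ D v.var x) →
      LDQDeriv ψ D (Ec ∪ Fc)

/-- A single valid LDQ(D)-Res step, given the list of previously derived clauses. -/
def LDQStep (ψ : DQBF V) (D : V → V → Prop) (prev : List (Clause V)) (C : Clause V) : Prop :=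
  C ∈ ψ.matrix ∨
    (∃ w : Lit V, w.var ∈ ψ.U ∧ w ∉ C ∧ insert w C ∈ prev ∧
      ∀ l ∈ C, l.var ∈ ψ.E → ¬ D w.var l.var) ∨
    (∃ (x : V) (Ec Fc : Clause V), x ∈ ψ.E ∧ C = Ec ∪ Fc ∧
      (⟨x, false⟩ : Lit V) ∉ Ec ∧ (⟨x, true⟩ : Lit V) ∉ Fc ∧
      insert (⟨x, false⟩ : Lit V) Ec ∈ prev ∧ insert (⟨x, true⟩ : Lit V) Fc ∈ prev ∧
      ∀ v ∈ Ec, v.var ∈ ψ.U → v.negate ∈ Fc → ¬ D v.var x)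

/-- An LDQ(D)-Res proof: a list of clauses, each a valid step from the earlier ones. -/
def IsLDQProof (ψ : DQBF V) (D : V → V → Prop) (π : List (Clause V)) : Prop :=
  ∀ i : Fin π.length, LDQStep ψ D (π.take i.val) (π.get i)

def IsLDQRefutation (ψ : DQBF V) (D : V → V → Prop) (π : List (Clause V)) : Prop :=
  IsLDQProof ψ D π ∧ (∅ : Clause V) ∈ π

/-- A single valid Q-Res step. -/
def QResStep (ψ : DQBF V) (prev : List (Clause V)) (C : Clause V) : Prop :=
  C ∈ ψ.matrix ∨
    (∃ w : Lit V, w.var ∈ ψ.U ∧ w ∉ C ∧ w.negate ∉ C ∧ insert w C ∈ prev ∧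
      ∀ l ∈ C, l.var ∈ ψ.E → w.var ∉ ψ.dep l.var) ∨
    (∃ (x : V) (Ec Fc : Clause V), x ∈ ψ.E ∧ C = Ec ∪ Fc ∧
      (⟨x, false⟩ : Lit V) ∉ Ec ∧ (⟨x, true⟩ : Lit V) ∉ Fc ∧
      insert (⟨x, false⟩ : Lit V) Ec ∈ prev ∧ insert (⟨x, true⟩ : Lit V) Fc ∈ prev ∧
      ∀ v ∈ Ec, v.var ∈ ψ.U → v.negate ∉ Fc)

def IsQResProof (ψ : DQBF V) (π : List (Clause V)) : Prop :=
  ∀ i : Fin π.length, QResStep ψ (π.take i.val) (π.get i)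

def IsQResRefutation (ψ : DQBF V) (π : List (Clause V)) : Prop :=
  IsQResProof ψ π ∧ (∅ : Clause V) ∈ π

/-! ## QBFs: DQBFs with a linear quantifier prefix -/

structure QBF (V : Type) [DecidableEq V] extends DQBF V where
  ord : V → ℕ

/-- Well-formedness of a QBF: dependency sets are induced by the prefix order. -/
def QBF.WF (ψ : QBF V) : Prop :=
  ψ.toDQBF.WF ∧
    (∀ a ∈ ψ.U ∪ ψ.E, ∀ b ∈ ψ.U ∪ ψ.E, ψ.ord a = ψ.ord b → a = b) ∧
    ∀ x ∈ ψ.E, ∀ u, u ∈ ψ.dep x ↔ u ∈ ψ.U ∧ ψ.ord u < ψ.ord x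

/-! ## IndExt-QU-Res -/

/-- The clause `¬α` of negations of the literals of a partial assignment `α`. -/
def negAssign (α : Finset (Lit V)) : Clause V := α.image Lit.negate

/-- Size of a DQBF. -/
def DQBF.size (ψ : DQBF V) : ℕ := ψ.U.card + ψ.E.card + ∑ C ∈ ψ.matrix, (C.card + 1)

/-- IndExt-QU-Res derivations: from the DQBF `ψ0`, reach a (possibly extended)
prefix together with a set of derived clauses, in the given number of steps. -/
inductive IndExtDeriv (ψ0 : DQBF V) : DQBF V → Finset (Clause V) → ℕ → Prop
  | start : IndExtDeriv ψ0 ψ0 ψ0.matrix 0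
  | res {ψ : DQBF V} {Γ : Finset (Clause V)} {n : ℕ} {Ec Fc : Clause V} {x : V} :
      IndExtDeriv ψ0 ψ Γ n → x ∈ ψ.E →
      (⟨x, false⟩ : Lit V) ∉ Ec → (⟨x, true⟩ : Lit V) ∉ Fc →
      insert (⟨x, false⟩ : Lit V) Ec ∈ Γ → insert (⟨x, true⟩ : Lit V) Fc ∈ Γ →
      IndExtDeriv ψ0 ψ (insert (Ec ∪ Fc) Γ) (n + 1)
  | red {ψ : DQBF V} {Γ : Finset (Clause V)} {n : ℕ} {C : Clause V} {w : Lit V} :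
      IndExtDeriv ψ0 ψ Γ n → insert w C ∈ Γ → w.var ∈ ψ.U → w ∉ C → w.negate ∉ C →
      (∀ l ∈ C, l.var ∈ ψ.E → w.var ∉ ψ.dep l.var) →
      IndExtDeriv ψ0 ψ (insert C Γ) (n + 1)
  | ext {ψ : DQBF V} {Γ : Finset (Clause V)} {n : ℕ} (α : Finset (Lit V)) (y1 y2 v : V) :
      IndExtDeriv ψ0 ψ Γ n →
      (∀ a ∈ α, a.var ∈ ψ.U) → v ∉ ψ.U ∪ ψ.E → y1 ∈ ψ.U ∪ ψ.E → y2 ∈ ψ.U ∪ ψ.E →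
      IndExtDeriv ψ0
        ⟨ψ.U, insert v ψ.E,
          Function.update ψ.dep v ((ψ.depOf y1 ∪ ψ.depOf y2) \ α.image Lit.var), ψ.matrix⟩
        (insert (negAssign α ∪ ({⟨v, true⟩, ⟨y1, true⟩} : Clause V))
          (insert (negAssign α ∪ ({⟨v, true⟩, ⟨y2, true⟩} : Clause V))
            (insert (negAssign α ∪ ({⟨v, false⟩, ⟨y1, false⟩, ⟨y2, false⟩} : Clause V)) Γ)))
        (n + 1)
  | weakU {ψ : DQBF V} {Γ : Finset (Clause V)} {n : ℕ} (v : V) :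
      IndExtDeriv ψ0 ψ Γ n → v ∉ ψ.U ∪ ψ.E →
      IndExtDeriv ψ0 ⟨insert v ψ.U, ψ.E, ψ.dep, ψ.matrix⟩ Γ (n + 1)
  | weakE {ψ : DQBF V} {Γ : Finset (Clause V)} {n : ℕ} (v : V) (Dv : Finset V) :
      IndExtDeriv ψ0 ψ Γ n → v ∉ ψ.U ∪ ψ.E → Dv ⊆ ψ.U →
      IndExtDeriv ψ0 ⟨ψ.U, insert v ψ.E, Function.update ψ.dep v Dv, ψ.matrix⟩ Γ (n + 1)

/-- Substituting variables in a clause. -/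
def Clause.subst (σ : V → V) (C : Clause V) : Clause V :=
  C.image fun l => (⟨σ l.var, l.pos⟩ : Lit V)

/-! ## Unit propagation, outer variables, and DQRAT(D^pu) -/

/-- Literals derivable by unit propagation from a (possibly infinite) clause set. -/
inductive UPLit (Φ : Set (Clause V)) : Lit V → Prop
  | unit {C : Clause V} {l : Lit V} : C ∈ Φ → l ∈ C →
      (∀ l' ∈ C, l' ≠ l → UPLit Φ l'.negate) → UPLit Φ l

/-- `Φ ⊢₁ ⊥`: unit propagation derives a conflict. -/
def UPBot (Φ : Set (Clause V)) : Prop := ∃ C ∈ Φ, ∀ l ∈ C, UPLit Φ l.negate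

/-- The unit clauses negating the literals of `C`. -/
def negUnits (C : Clause V) : Set (Clause V) := {D | ∃ l ∈ C, D = ({l.negate} : Clause V)}

def DQBF.Inner (ψ : DQBF V) (u : V) : Set V := {y | y ∈ ψ.E ∧ u ∈ ψ.dep y}

/-- The set of outer variables of a variable. -/
def DQBF.Outer (ψ : DQBF V) (x : V) : Set V :=
  if x ∈ ψ.U then
    {x} ∪ ((↑(ψ.U ∪ ψ.E) : Set V) ∩ ⋂ z ∈ ψ.Inner x, {y | ψ.depOf y ⊆ ψ.dep z \ {x}})
  else {y | y ∈ ψ.U ∪ ψ.E ∧ ψ.depOf y ⊆ ψ.dep x}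

/-- `y ≲_Π x`. -/
def outerLe (ψ : DQBF V) (y x : V) : Prop := y ∈ ψ.Outer x

/-- `D_C`, the union of the dependency sets of the variables of a clause. -/
def depClause (ψ : DQBF V) (C : Clause V) : Finset V := C.biUnion fun l => ψ.depOf l.var

/-- The unit clauses used in the DQRAT side condition: outer literals of `D` negated. -/
def ratUnits (ψ : DQBF V) (D : Clause V) (l : Lit V) : Set (Clause V) :=
  {Dc | ∃ x ∈ D, x ≠ l.negate ∧ outerLe ψ x.var l.var ∧ Dc = ({x.negate} : Clause V)}

/-- DQRAT(D^pu) derivations: sequences of DQBFs, each obtained from the previous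
one by one of the rules ATA, Del, UR, DQRAT∃, DQRAT∀, BPM, D^pu. -/
inductive DQRATDeriv (ψ0 : DQBF V) : DQBF V → ℕ → Prop
  | start : DQRATDeriv ψ0 ψ0 0
  | ata {ψ : DQBF V} {n : ℕ} (C : Clause V) :
      DQRATDeriv ψ0 ψ n → UPBot ((↑ψ.matrix : Set (Clause V)) ∪ negUnits C) →
      DQRATDeriv ψ0 ⟨ψ.U, ψ.E, ψ.dep, insert C ψ.matrix⟩ (n + 1)
  | del {ψ : DQBF V} {n : ℕ} (C : Clause V) :
      DQRATDeriv ψ0 ψ n → C ∈ ψ.matrix →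
      DQRATDeriv ψ0 ⟨ψ.U, ψ.E, ψ.dep, ψ.matrix.erase C⟩ (n + 1)
  | ur {ψ : DQBF V} {n : ℕ} (C : Clause V) (l : Lit V) :
      DQRATDeriv ψ0 ψ n → insert l C ∈ ψ.matrix → l ∉ C → l.var ∈ ψ.U →
      l.var ∉ depClause ψ C →
      DQRATDeriv ψ0 ⟨ψ.U, ψ.E, ψ.dep, insert C (ψ.matrix.erase (insert l C))⟩ (n + 1)
  | ratE {ψ : DQBF V} {n : ℕ} (C : Clause V) (l : Lit V) :
      DQRATDeriv ψ0 ψ n → l.var ∈ ψ.E → l ∉ C →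
      (∀ D ∈ ψ.matrix, l.negate ∈ D →
        UPBot ((↑ψ.matrix : Set (Clause V)) ∪ negUnits (insert l C) ∪ ratUnits ψ D l)) →
      DQRATDeriv ψ0 ⟨ψ.U, ψ.E, ψ.dep, insert (insert l C) ψ.matrix⟩ (n + 1)
  | ratA {ψ : DQBF V} {n : ℕ} (C : Clause V) (l : Lit V) :
      DQRATDeriv ψ0 ψ n → l.var ∈ ψ.U → l ∉ C → insert l C ∈ ψ.matrix →
      (∀ D ∈ ψ.matrix, l.negate ∈ D →
        UPBot ((↑ψ.matrix : Set (Clause V)) ∪ negUnits C ∪ {({l} : Clause V)} ∪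
          ratUnits ψ D l)) →
      DQRATDeriv ψ0 ⟨ψ.U, ψ.E, ψ.dep, insert C (ψ.matrix.erase (insert l C))⟩ (n + 1)
  | bpm {ψ : DQBF V} {n : ℕ} (ψ' : DQBF V) :
      DQRATDeriv ψ0 ψ n → ψ.U ⊆ ψ'.U → ψ.E ⊆ ψ'.E → Disjoint ψ'.U ψ'.E →
      (∀ x ∈ ψ.E, ψ'.dep x = ψ.dep x) → (∀ x ∈ ψ'.E, ψ'.dep x ⊆ ψ'.U) →
      ψ'.matrix = ψ.matrix →
      DQRATDeriv ψ0 ψ' (n + 1)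
  | dpuStep {ψ : DQBF V} {n : ℕ} (ψ' : DQBF V) :
      DQRATDeriv ψ0 ψ n → ψ'.U = ψ.U → ψ'.E = ψ.E → ψ'.matrix = ψ.matrix →
      (∀ u x, x ∈ ψ.E → u ∉ ψ'.dep x → (u ∉ ψ.dep x ∨ ¬ Dpu ψ u x)) →
      DQRATDeriv ψ0 ψ' (n + 1)

/-- A DQRAT(D^pu) refutation of `ψ0` with `n` steps. -/
def DQRATRefutable (ψ0 : DQBF V) (n : ℕ) : Prop :=
  ∃ ψ : DQBF V, DQRATDeriv ψ0 ψ n ∧ (∅ : Clause V) ∈ ψ.matrix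

/-! ## The ts-LQParity formulas -/

inductive PVar : Type where
  | x : ℕ → PVar
  | z : PVar
  | t : ℕ → PVar
  | s : ℕ → PVar
  | b : PVar
deriving DecidableEq

def L (v : PVar) (b : Bool) : Lit PVar := ⟨v, b⟩

/-- The four clauses of `xor_l(o1, o2, o, zl)`. -/
def xorl (o1 o2 o : PVar) (zl : Lit PVar) : Finset (Clause PVar) :=
  { {zl, L o1 false, L o2 false, L o false},
    {zl, L o1 true,  L o2 true,  L o false},
    {zl, L o1 false, L o2 true,  L o true},
    {zl, L o1 true,  L o2 false, L o true} }

def tsMatrix (N : ℕ) : Finset (Clause PVar) :=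
  xorl (.x 1) (.x 2) (.t 2) (L .z true) ∪
    (Finset.Icc 3 N).biUnion (fun i => xorl (.t (i - 1)) (.x i) (.t i) (L .z true)) ∪
    xorl (.x 1) (.x 2) (.s 2) (L .z false) ∪
    (Finset.Icc 3 N).biUnion (fun i => xorl (.s (i - 1)) (.x i) (.s i) (L .z false)) ∪
    {{L .z true, L (.t N) true}, {L .z false, L (.s N) false}}

def tsDep : PVar → Finset PVar
  | .t _ => {.z}
  | .s _ => {.z}
  | .b => {.z}
  | _ => ∅

/-- The QBF ts-LQParity(N), presented as a DQBF. -/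
def tsLQParity (N : ℕ) : DQBF PVar where
  U := {.z}
  E := (Finset.Icc 1 N).image PVar.x ∪ (Finset.Icc 2 N).image PVar.t ∪
    (Finset.Icc 2 N).image PVar.s
  dep := tsDep
  matrix := tsMatrix N

def bridgedMatrix (N : ℕ) : Finset (Clause PVar) :=
  tsMatrix N ∪
    { {L .z true, L (.t N) false, L .b true}, {L .z true, L (.t N) true, L .b false},
      {L .z false, L (.s N) false, L .b true}, {L .z false, L (.s N) true, L .b false} }

/-- The QBF Bridged ts-LQParity(N), presented as a DQBF. -/
def bridged (N : ℕ) : DQBF PVar where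
  U := {.z}
  E := (Finset.Icc 1 N).image PVar.x ∪ (Finset.Icc 2 N).image PVar.t ∪
    (Finset.Icc 2 N).image PVar.s ∪ {.b}
  dep := tsDep
  matrix := bridgedMatrix N

/-! ## The NP-hardness gadget -/

inductive GVar (W : Type) : Type where
  | v : W → GVar W
  | u : GVar W
  | x : GVar W
deriving DecidableEq

/-- The gadget DQBF `∀(V ∪ {u}) ∃x(V ∪ {u}). (⋁_{v ∈ V} v) ∨ u ∨ ¬x`. -/
def gadget {W : Type} [DecidableEq W] (Vs : Finset W) : DQBF (GVar W) where
  U := Vs.image GVar.v ∪ {GVar.u}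
  E := {GVar.x}
  dep := fun y => if y = GVar.x then Vs.image GVar.v ∪ {GVar.u} else ∅
  matrix := {Vs.image (fun w => (⟨GVar.v w, true⟩ : Lit (GVar W))) ∪
    ({⟨GVar.u, true⟩, ⟨GVar.x, false⟩} : Clause (GVar W))}

/-- The Skolem function `f_x = φ(V) ∧ u`. -/
def gadgetSkolem {W : Type} [DecidableEq W] (φ : Finset (Clause W)) :
    GVar W → (GVar W → Bool) → Bool := fun y β =>
  if y = GVar.x then
    (decide (∀ C ∈ φ, ∃ l ∈ C, β (GVar.v l.var) = l.pos)) && β GVar.u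
  else false

/-! ### Auxiliary lemmas for Statement 10 -/

section Aux

lemma t_mem_Sset {N i : ℕ} (h2 : 2 ≤ i) (hiN : i ≤ N) :
    PVar.t i ∈ (bridged N).Sset PVar.z := by
  simp [DQBF.Sset, bridged, tsDep, h2, hiN]

lemma s_mem_Sset {N i : ℕ} (h2 : 2 ≤ i) (hiN : i ≤ N) :
    PVar.s i ∈ (bridged N).Sset PVar.z := by
  simp [DQBF.Sset, bridged, tsDep, h2, hiN]

lemma b_mem_Sset {N : ℕ} : PVar.b ∈ (bridged N).Sset PVar.z := by
  simp [DQBF.Sset, bridged, tsDep]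

lemma bridge_mem {N : ℕ} {C : Clause PVar}
    (hC : C ∈ ({ {L .z true, L (.t N) false, L .b true}, {L .z true, L (.t N) true, L .b false},
      {L .z false, L (.s N) false, L .b true}, {L .z false, L (.s N) true, L .b false} } :
      Finset (Clause PVar))) : C ∈ bridgedMatrix N :=
  Finset.mem_union_right _ hC

lemma xorlT2_mem {N : ℕ} {C : Clause PVar}
    (hC : C ∈ xorl (.x 1) (.x 2) (.t 2) (L .z true)) : C ∈ bridgedMatrix N := by
  unfold bridgedMatrix tsMatrix
  exact Finset.mem_union_left _ (Finset.mem_union_left _ (Finset.mem_union_left _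
    (Finset.mem_union_left _ (Finset.mem_union_left _ hC))))

lemma xorlTi_mem {N i : ℕ} (h3 : 3 ≤ i) (hiN : i ≤ N) {C : Clause PVar}
    (hC : C ∈ xorl (.t (i - 1)) (.x i) (.t i) (L .z true)) : C ∈ bridgedMatrix N := by
  unfold bridgedMatrix tsMatrix
  exact Finset.mem_union_left _ (Finset.mem_union_left _ (Finset.mem_union_left _
    (Finset.mem_union_left _ (Finset.mem_union_right _
      (Finset.mem_biUnion.mpr ⟨i, Finset.mem_Icc.mpr ⟨h3, hiN⟩, hC⟩)))))

lemma xorlS2_mem {N : ℕ} {C : Clause PVar}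
    (hC : C ∈ xorl (.x 1) (.x 2) (.s 2) (L .z false)) : C ∈ bridgedMatrix N := by
  unfold bridgedMatrix tsMatrix
  exact Finset.mem_union_left _ (Finset.mem_union_left _ (Finset.mem_union_left _
    (Finset.mem_union_right _ hC)))

lemma xorlSi_mem {N i : ℕ} (h3 : 3 ≤ i) (hiN : i ≤ N) {C : Clause PVar}
    (hC : C ∈ xorl (.s (i - 1)) (.x i) (.s i) (L .z false)) : C ∈ bridgedMatrix N := by
  unfold bridgedMatrix tsMatrix
  exact Finset.mem_union_left _ (Finset.mem_union_left _ (Finset.mem_union_right _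
    (Finset.mem_biUnion.mpr ⟨i, Finset.mem_Icc.mpr ⟨h3, hiN⟩, hC⟩)))

/-- Base rule specialized to the bridged formula with universal literal `⟨z, cz⟩`. -/
lemma conn_base {N : ℕ} {cz : Bool} {C : Clause PVar} {l : Lit PVar}
    (hC : C ∈ bridgedMatrix N) (hw : (⟨.z, cz⟩ : Lit PVar) ∈ C) (hl : l ∈ C)
    (hS : l.var ∈ (bridged N).Sset PVar.z) :
    ConnRRS (bridged N) ⟨.z, cz⟩ l :=
  PathLRRS.base (Finset.mem_filter.mpr ⟨hC, hw⟩) hl hS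

lemma conn_step {N : ℕ} {cz : Bool} {p l : Lit PVar} {Ecl : Clause PVar}
    (hp : ConnRRS (bridged N) ⟨.z, cz⟩ p) (hE : Ecl ∈ bridgedMatrix N)
    (hneg : p.negate ∈ Ecl) (hl : l ∈ Ecl) (hne : l ≠ p.negate)
    (hS : l.var ∈ (bridged N).Sset PVar.z) :
    ConnRRS (bridged N) ⟨.z, cz⟩ l :=
  PathLRRS.step hp hE hneg hl hne hS

/-- Descent along an `xorl` chain: reaching both polarities at index `N` yields
both polarities at every index `2 ≤ i ≤ N`. -/
lemma descend {N : ℕ} (cz : Bool) (f : ℕ → PVar) (zl : Lit PVar)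
    (hS : ∀ i, 2 ≤ i → i ≤ N → f i ∈ (bridged N).Sset PVar.z)
    (hne : ∀ i, 3 ≤ i → f (i - 1) ≠ f i)
    (hcl : ∀ i, 3 ≤ i → i ≤ N → ∀ C ∈ xorl (f (i - 1)) (.x i) (f i) zl, C ∈ bridgedMatrix N)
    (hbase : ∀ c, ConnRRS (bridged N) ⟨.z, cz⟩ ⟨f N, c⟩) :
    ∀ i, 2 ≤ i → i ≤ N → ∀ c, ConnRRS (bridged N) ⟨.z, cz⟩ ⟨f i, c⟩ := by
  have key : ∀ k i, 2 ≤ i → i + k = N → ∀ c, ConnRRS (bridged N) ⟨.z, cz⟩ ⟨f i, c⟩ := by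
    intro k
    induction k with
    | zero =>
      intro i h2 hik c
      have : i = N := by omega
      subst this
      exact hbase c
    | succ k ih =>
      intro i h2 hik c
      have hp : ConnRRS (bridged N) ⟨.z, cz⟩ ⟨f (i + 1), true⟩ :=
        ih (i + 1) (by omega) (by omega) true
      have h3 : 3 ≤ i + 1 := by omega
      have hi1 : i + 1 ≤ N := by omega
      have hEq : i + 1 - 1 = i := by omega
      have hfne : f i ≠ f (i + 1) := by
        have := hne (i + 1) h3
        rwa [hEq] at this
      have hne' : (⟨f i, c⟩ : Lit PVar) ≠ Lit.negate ⟨f (i + 1), true⟩ := by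
        simp only [Lit.negate, ne_eq, Lit.mk.injEq]
        intro h
        exact hfne h.1
      have hcl' := hcl (i + 1) h3 hi1
      rw [hEq] at hcl'
      have hiS := hS i h2 (by omega)
      cases c with
      | false =>
        refine conn_step hp (hcl' {zl, L (f i) false, L (.x (i + 1)) false, L (f (i + 1)) false}
          ?_) ?_ ?_ hne' hiS
        · simp [xorl]
        · simp [Lit.negate, L]
        · simp [L]
      | true =>
        refine conn_step hp (hcl' {zl, L (f i) true, L (.x (i + 1)) true, L (f (i + 1)) false}
          ?_) ?_ ?_ hne' hiS
        · simp [xorl]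
        · simp [Lit.negate, L]
        · simp [L]
  intro i h2 hiN c
  exact key (N - i) i h2 (by omega) c

/-- With `w = z⁺`, every `t`-literal is reachable directly. -/
lemma reach_t_pos {N j : ℕ} (h2 : 2 ≤ j) (hjN : j ≤ N) (c : Bool) :
    ConnRRS (bridged N) ⟨.z, true⟩ ⟨.t j, c⟩ := by
  rcases Nat.lt_or_ge j 3 with h3 | h3
  · have : j = 2 := by omega
    subst this
    cases c with
    | true =>
      refine conn_base (xorlT2_mem (C := {L .z true, L (.x 1) false, L (.x 2) true,
        L (.t 2) true}) (by simp [xorl])) (by simp [L]) (by simp [L]) ?_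
      exact t_mem_Sset h2 hjN
    | false =>
      refine conn_base (xorlT2_mem (C := {L .z true, L (.x 1) false, L (.x 2) false,
        L (.t 2) false}) (by simp [xorl])) (by simp [L]) (by simp [L]) ?_
      exact t_mem_Sset h2 hjN
  · cases c with
    | true =>
      refine conn_base (xorlTi_mem h3 hjN (C := {L .z true, L (.t (j - 1)) false,
        L (.x j) true, L (.t j) true}) (by simp [xorl])) (by simp [L]) (by simp [L]) ?_
      exact t_mem_Sset h2 hjN
    | false =>
      refine conn_base (xorlTi_mem h3 hjN (C := {L .z true, L (.t (j - 1)) false,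
        L (.x j) false, L (.t j) false}) (by simp [xorl])) (by simp [L]) (by simp [L]) ?_
      exact t_mem_Sset h2 hjN

/-- With `w = z⁻`, every `s`-literal is reachable directly. -/
lemma reach_s_neg {N j : ℕ} (h2 : 2 ≤ j) (hjN : j ≤ N) (c : Bool) :
    ConnRRS (bridged N) ⟨.z, false⟩ ⟨.s j, c⟩ := by
  rcases Nat.lt_or_ge j 3 with h3 | h3
  · have : j = 2 := by omega
    subst this
    cases c with
    | true =>
      refine conn_base (xorlS2_mem (C := {L .z false, L (.x 1) false, L (.x 2) true,
        L (.s 2) true}) (by simp [xorl])) (by simp [L]) (by simp [L]) ?_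
      exact s_mem_Sset h2 hjN
    | false =>
      refine conn_base (xorlS2_mem (C := {L .z false, L (.x 1) false, L (.x 2) false,
        L (.s 2) false}) (by simp [xorl])) (by simp [L]) (by simp [L]) ?_
      exact s_mem_Sset h2 hjN
  · cases c with
    | true =>
      refine conn_base (xorlSi_mem h3 hjN (C := {L .z false, L (.s (j - 1)) false,
        L (.x j) true, L (.s j) true}) (by simp [xorl])) (by simp [L]) (by simp [L]) ?_
      exact s_mem_Sset h2 hjN
    | false =>
      refine conn_base (xorlSi_mem h3 hjN (C := {L .z false, L (.s (j - 1)) false,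
        L (.x j) false, L (.s j) false}) (by simp [xorl])) (by simp [L]) (by simp [L]) ?_
      exact s_mem_Sset h2 hjN

/-- With `w = z⁺`, both `b`-literals are reachable directly. -/
lemma reach_b_pos {N : ℕ} (c : Bool) :
    ConnRRS (bridged N) ⟨.z, true⟩ ⟨.b, c⟩ := by
  cases c with
  | true =>
    exact conn_base (bridge_mem (C := {L .z true, L (.t N) false, L .b true}) (by simp))
      (by simp [L]) (by simp [L]) b_mem_Sset
  | false =>
    exact conn_base (bridge_mem (C := {L .z true, L (.t N) true, L .b false}) (by simp))
      (by simp [L]) (by simp [L]) b_mem_Sset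

/-- With `w = z⁻`, both `b`-literals are reachable directly. -/
lemma reach_b_neg {N : ℕ} (c : Bool) :
    ConnRRS (bridged N) ⟨.z, false⟩ ⟨.b, c⟩ := by
  cases c with
  | true =>
    exact conn_base (bridge_mem (C := {L .z false, L (.s N) false, L .b true}) (by simp))
      (by simp [L]) (by simp [L]) b_mem_Sset
  | false =>
    exact conn_base (bridge_mem (C := {L .z false, L (.s N) true, L .b false}) (by simp))
      (by simp [L]) (by simp [L]) b_mem_Sset

/-- With `w = z⁻`, both `t N`-literals are reachable via the bridge. -/
lemma reach_tN_neg {N : ℕ} (hN : 2 ≤ N) (c : Bool) :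
    ConnRRS (bridged N) ⟨.z, false⟩ ⟨.t N, c⟩ := by
  cases c with
  | true =>
    refine conn_step (reach_b_neg true)
      (bridge_mem (C := {L .z true, L (.t N) true, L .b false}) (by simp))
      (by simp [Lit.negate, L]) (by simp [L]) (by simp [L, Lit.negate])
      (t_mem_Sset hN le_rfl)
  | false =>
    refine conn_step (reach_b_neg false)
      (bridge_mem (C := {L .z true, L (.t N) false, L .b true}) (by simp))
      (by simp [Lit.negate, L]) (by simp [L]) (by simp [L, Lit.negate])
      (t_mem_Sset hN le_rfl)

/-- With `w = z⁺`, both `s N`-literals are reachable via the bridge. -/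
lemma reach_sN_pos {N : ℕ} (hN : 2 ≤ N) (c : Bool) :
    ConnRRS (bridged N) ⟨.z, true⟩ ⟨.s N, c⟩ := by
  cases c with
  | true =>
    refine conn_step (reach_b_pos true)
      (bridge_mem (C := {L .z false, L (.s N) true, L .b false}) (by simp))
      (by simp [Lit.negate, L]) (by simp [L]) (by simp [L, Lit.negate])
      (s_mem_Sset hN le_rfl)
  | false =>
    refine conn_step (reach_b_pos false)
      (bridge_mem (C := {L .z false, L (.s N) false, L .b true}) (by simp))
      (by simp [Lit.negate, L]) (by simp [L]) (by simp [L, Lit.negate])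
      (s_mem_Sset hN le_rfl)

lemma reach_t_neg {N j : ℕ} (hN : 2 ≤ N) (h2 : 2 ≤ j) (hjN : j ≤ N) (c : Bool) :
    ConnRRS (bridged N) ⟨.z, false⟩ ⟨.t j, c⟩ := by
  refine descend false PVar.t (L .z true) (fun i hi hi' => t_mem_Sset hi hi')
    (fun i hi => by simp; omega) (fun i hi hi' C hC => xorlTi_mem hi hi' hC)
    (reach_tN_neg hN) j h2 hjN c

lemma reach_s_pos {N j : ℕ} (hN : 2 ≤ N) (h2 : 2 ≤ j) (hjN : j ≤ N) (c : Bool) :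
    ConnRRS (bridged N) ⟨.z, true⟩ ⟨.s j, c⟩ := by
  refine descend true PVar.s (L .z false) (fun i hi hi' => s_mem_Sset hi hi')
    (fun i hi => by simp; omega) (fun i hi hi' C hC => xorlSi_mem hi hi' hC)
    (reach_sN_pos hN) j h2 hjN c

end Aux

/-- D^rrs is trivial on Bridged ts-LQParity. For every `N ≥ 2` and
every existential variable `y` of Bridged ts-LQParity(N) with `z ∈ D_y`, the pair
`(z,y)` belongs to `D^rrs`. -/
theorem bridged_drrs_trivial (N : ℕ) (hN : 2 ≤ N) (y : PVar)
    (hy : y ∈ (bridged N).E) (hz : PVar.z ∈ (bridged N).dep y) :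
    Drrs (bridged N) PVar.z y := by
  refine ⟨hz, Or.inl ?_⟩
  match y with
  | .x j => simp [bridged, tsDep] at hz
  | .z => simp [bridged, tsDep] at hz
  | .t j =>
    have hj : 2 ≤ j ∧ j ≤ N := by
      simp only [bridged, Finset.mem_union, Finset.mem_image, Finset.mem_Icc,
        Finset.mem_singleton] at hy
      rcases hy with ((h | h) | h) | h
      · obtain ⟨a, _, ha⟩ := h; exact absurd ha (by simp)
      · obtain ⟨a, ha, ha'⟩ := h; cases ha'; exact ha
      · obtain ⟨a, _, ha⟩ := h; exact absurd ha (by simp)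
      · exact absurd h (by simp)
    exact ⟨reach_t_pos hj.1 hj.2 true, reach_t_neg hN hj.1 hj.2 false⟩
  | .s j =>
    have hj : 2 ≤ j ∧ j ≤ N := by
      simp only [bridged, Finset.mem_union, Finset.mem_image, Finset.mem_Icc,
        Finset.mem_singleton] at hy
      rcases hy with ((h | h) | h) | h
      · obtain ⟨a, _, ha⟩ := h; exact absurd ha (by simp)
      · obtain ⟨a, _, ha⟩ := h; exact absurd ha (by simp)
      · obtain ⟨a, ha, ha'⟩ := h; cases ha'; exact ha
      · exact absurd h (by simp)
    exact ⟨reach_s_pos hN hj.1 hj.2 true, reach_s_neg hj.1 hj.2 false⟩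
  | .b =>
    exact ⟨reach_b_pos true, reach_b_neg false⟩
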